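/- Let f = (v1, v2, v3) be a non-degenerate counterclockwise-oriented triangle in ℂ with vertices z1, z2, z3, circumradius R, and area A. For complex functions Φ, Ψ on the vertices, define ∇Φ(f) = (1/(4i))·(Φ(v1)(z̄3−z̄2) + Φ(v2)(z̄1−z̄3) + Φ(v3)(z̄2−z̄1))/A and ∇̄Ψ(f) = −(1/(4i))·(Ψ(v1)(z3−z2) + Ψ(v2)(z1−z3) + Ψ(v3)(z2−z1))/A. Then ∑_{i,j} Φ(v_i) D(f)_{ij} Ψ̄(v_j) = (A/R²)·∇̄Φ(f)·∇Ψ̄(f), where D(f) is the Kähler matrix of the triangle. -/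

import Mathlib

open Real

/-- The 3×3 Kähler matrix `D(f)` of a triangle with angles `α1, α2, α3` and
circumradius `R`. -/
noncomputable def Dmat (α1 α2 α3 R : ℝ) : Matrix (Fin 3) (Fin 3) ℂ :=
  (1 / (8 * (R : ℂ) ^ 2)) •
    !![(Real.cot α2 : ℂ) + (Real.cot α3 : ℂ),
        -(Real.cot α3 : ℂ) - Complex.I, -(Real.cot α2 : ℂ) + Complex.I;
      -(Real.cot α3 : ℂ) + Complex.I,
        (Real.cot α3 : ℂ) + (Real.cot α1 : ℂ), -(Real.cot α1 : ℂ) - Complex.I;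
      -(Real.cot α2 : ℂ) - Complex.I, -(Real.cot α1 : ℂ) + Complex.I,
        (Real.cot α1 : ℂ) + (Real.cot α2 : ℂ)]

private lemma stmt9aux (A R : ℝ) (P Q : ℂ) (hAC : (A:ℂ) ≠ 0) (hRC : (R:ℂ) ≠ 0) :
    ((A / R ^ 2 : ℝ) : ℂ) * (-(1 / (4 * Complex.I)) * P / (A:ℂ)) * ((1 / (4 * Complex.I)) * Q / (A:ℂ))
      = P * Q / (16 * (R:ℂ)^2 * (A:ℂ)) := by
  rw [eq_comm]
  push_cast
  field_simp [Complex.I_ne_zero]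
  linear_combination (16*P*Q) * Complex.I_sq

set_option maxHeartbeats 2000000 in
/-- For a non-degenerate counterclockwise triangle with vertices `z1, z2, z3`,
angles `αk` at `zk`, circumradius `R` and area `A`, and complex functions `Φ, Ψ`
on the vertices, `∑_{i,j} Φ_i D(f)_{ij} Ψ̄_j = (A/R²)·∇̄Φ(f)·∇Ψ̄(f)`, where
`∇Φ(f) = (1/4i)(Φ₁(z̄3−z̄2)+Φ₂(z̄1−z̄3)+Φ₃(z̄2−z̄1))/A` and
`∇̄Φ(f) = −(1/4i)(Φ₁(z3−z2)+Φ₂(z1−z3)+Φ₃(z2−z1))/A`. -/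
theorem stmt9 (α1 α2 α3 R A : ℝ) (z1 z2 z3 : ℂ) (Φ Ψ : Fin 3 → ℂ)
    (h1 : α1 ∈ Set.Ioo 0 π) (h2 : α2 ∈ Set.Ioo 0 π) (h3 : α3 ∈ Set.Ioo 0 π)
    (hsum : α1 + α2 + α3 = π) (hR : 0 < R) (hA : 0 < A)
    (harea : ((z3 - z1) * ((starRingEnd ℂ) z2 - (starRingEnd ℂ) z1)
        - (z2 - z1) * ((starRingEnd ℂ) z3 - (starRingEnd ℂ) z1)) /
          (4 * Complex.I) = (A : ℂ))
    (hz1 : z3 - z1 = (z2 - z1) * ((Real.sin α2 / Real.sin α3 : ℝ) : ℂ) *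
      Complex.exp (Complex.I * (α1 : ℂ)))
    (hz2 : z1 - z2 = (z3 - z2) * ((Real.sin α3 / Real.sin α1 : ℝ) : ℂ) *
      Complex.exp (Complex.I * (α2 : ℂ)))
    (hz3 : z2 - z3 = (z1 - z3) * ((Real.sin α1 / Real.sin α2 : ℝ) : ℂ) *
      Complex.exp (Complex.I * (α3 : ℂ)))
    (hl : ‖z2 - z1‖ = 2 * R * Real.sin α3) :
    ∑ i : Fin 3, ∑ j : Fin 3, Φ i * Dmat α1 α2 α3 R i j * (starRingEnd ℂ) (Ψ j)
      = ((A / R ^ 2 : ℝ) : ℂ) *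
        (-(1 / (4 * Complex.I)) *
          (Φ 0 * (z3 - z2) + Φ 1 * (z1 - z3) + Φ 2 * (z2 - z1)) / (A : ℂ)) *
        ((1 / (4 * Complex.I)) *
          ((starRingEnd ℂ) (Ψ 0) * ((starRingEnd ℂ) z3 - (starRingEnd ℂ) z2)
            + (starRingEnd ℂ) (Ψ 1) * ((starRingEnd ℂ) z1 - (starRingEnd ℂ) z3)
            + (starRingEnd ℂ) (Ψ 2) * ((starRingEnd ℂ) z2 - (starRingEnd ℂ) z1))
          / (A : ℂ)) := by
  obtain ⟨h1a, h1b⟩ := h1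
  obtain ⟨h2a, h2b⟩ := h2
  obtain ⟨h3a, h3b⟩ := h3
  have hs1 : 0 < Real.sin α1 := Real.sin_pos_of_pos_of_lt_pi h1a h1b
  have hs2 : 0 < Real.sin α2 := Real.sin_pos_of_pos_of_lt_pi h2a h2b
  have hs3 : 0 < Real.sin α3 := Real.sin_pos_of_pos_of_lt_pi h3a h3b
  have hs1C : ((Real.sin α1 : ℂ)) ≠ 0 := by exact_mod_cast hs1.ne'
  have hs2C : ((Real.sin α2 : ℂ)) ≠ 0 := by exact_mod_cast hs2.ne'
  have hs3C : ((Real.sin α3 : ℂ)) ≠ 0 := by exact_mod_cast hs3.ne'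
  have hs1C' : Complex.sin (α1 : ℂ) ≠ 0 := by rwa [← Complex.ofReal_sin]
  have hs2C' : Complex.sin (α2 : ℂ) ≠ 0 := by rwa [← Complex.ofReal_sin]
  have hs3C' : Complex.sin (α3 : ℂ) ≠ 0 := by rwa [← Complex.ofReal_sin]
  have hRC : ((R : ℂ)) ≠ 0 := by exact_mod_cast hR.ne'
  have hAC : ((A : ℂ)) ≠ 0 := by exact_mod_cast hA.ne'
  have h2A : (2 * (A : ℂ)) ≠ 0 := by simp [hAC]
  have hm : ((Real.sin α1 : ℂ) * (Real.sin α2 : ℂ) * (Real.sin α3 : ℂ)^2) ≠ 0 :=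
    mul_ne_zero (mul_ne_zero hs1C hs2C) (pow_ne_zero 2 hs3C)
  -- real trig facts, cast to ℂ
  have hT1 : (Real.sin α1 : ℂ) = (Real.sin α2 : ℂ) * (Real.cos α3 : ℂ) + (Real.cos α2 : ℂ) * (Real.sin α3 : ℂ) := by
    have : Real.sin α1 = Real.sin α2 * Real.cos α3 + Real.cos α2 * Real.sin α3 := by
      rw [show α1 = π - (α2 + α3) by linarith, Real.sin_pi_sub, Real.sin_add]
    exact_mod_cast this
  have hT2 : (Real.sin α2 : ℂ) = (Real.sin α1 : ℂ) * (Real.cos α3 : ℂ) + (Real.cos α1 : ℂ) * (Real.sin α3 : ℂ) := by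
    have : Real.sin α2 = Real.sin α1 * Real.cos α3 + Real.cos α1 * Real.sin α3 := by
      rw [show α2 = π - (α1 + α3) by linarith, Real.sin_pi_sub, Real.sin_add]
    exact_mod_cast this
  have hT3 : (Real.sin α3 : ℂ) = (Real.sin α1 : ℂ) * (Real.cos α2 : ℂ) + (Real.cos α1 : ℂ) * (Real.sin α2 : ℂ) := by
    have : Real.sin α3 = Real.sin α1 * Real.cos α2 + Real.cos α1 * Real.sin α2 := by
      rw [show α3 = π - (α1 + α2) by linarith, Real.sin_pi_sub, Real.sin_add]
    exact_mod_cast this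
  have hC2 : (Real.cos α2 : ℂ) = (Real.sin α1 : ℂ) * (Real.sin α3 : ℂ) - (Real.cos α1 : ℂ) * (Real.cos α3 : ℂ) := by
    have : Real.cos α2 = Real.sin α1 * Real.sin α3 - Real.cos α1 * Real.cos α3 := by
      rw [show α2 = π - (α1 + α3) by linarith, Real.cos_pi_sub, Real.cos_add]; ring
    exact_mod_cast this
  have hP1' : (Real.sin α1 : ℂ)^2 + (Real.cos α1 : ℂ)^2 = 1 := by
    have := Real.sin_sq_add_cos_sq α1; exact_mod_cast this
  have hP3' : (Real.sin α3 : ℂ)^2 + (Real.cos α3 : ℂ)^2 = 1 := by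
    have := Real.sin_sq_add_cos_sq α3; exact_mod_cast this
  have hQ1 : (Real.cot α1 : ℂ) * (Real.sin α1 : ℂ) = (Real.cos α1 : ℂ) := by
    have : Real.cot α1 * Real.sin α1 = Real.cos α1 := by
      rw [Real.cot_eq_cos_div_sin]; field_simp
    exact_mod_cast this
  have hQ2 : (Real.cot α2 : ℂ) * (Real.sin α2 : ℂ) = (Real.cos α2 : ℂ) := by
    have : Real.cot α2 * Real.sin α2 = Real.cos α2 := by
      rw [Real.cot_eq_cos_div_sin]; field_simp
    exact_mod_cast this
  have hQ3 : (Real.cot α3 : ℂ) * (Real.sin α3 : ℂ) = (Real.cos α3 : ℂ) := by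
    have : Real.cot α3 * Real.sin α3 = Real.cos α3 := by
      rw [Real.cot_eq_cos_div_sin]; field_simp
    exact_mod_cast this
  have hI : Complex.I ^ 2 = -1 := Complex.I_sq
  -- Euler
  have he : ∀ β : ℝ, Complex.exp (Complex.I * (β : ℂ)) = (Real.cos β : ℂ) + (Real.sin β : ℂ) * Complex.I := by
    intro β
    rw [mul_comm, Complex.exp_mul_I, Complex.ofReal_cos, Complex.ofReal_sin]
  rw [he α1] at hz1
  rw [he α3] at hz3
  -- side relations, denominator free
  have hz1' : (z3 - z1) * (Real.sin α3 : ℂ) = (z2 - z1) * ((Real.sin α2 : ℂ) * ((Real.cos α1 : ℂ) + (Real.sin α1 : ℂ) * Complex.I)) := by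
    rw [hz1, Complex.ofReal_div]; field_simp
  have hz3' : (z2 - z3) * (Real.sin α2 : ℂ) = (z1 - z3) * ((Real.sin α1 : ℂ) * ((Real.cos α3 : ℂ) + (Real.sin α3 : ℂ) * Complex.I)) := by
    rw [hz3, Complex.ofReal_div]; field_simp
  have hH2 : (z1 - z3) * (Real.sin α3 : ℂ) = -((z2 - z1) * ((Real.sin α2 : ℂ) * ((Real.cos α1 : ℂ) + (Real.sin α1 : ℂ) * Complex.I))) := by
    linear_combination -hz1'
  have hH1 : (z3 - z2) * (Real.sin α3 : ℂ) = (z2 - z1) * ((Real.sin α1 : ℂ) * ((Real.cos α1 : ℂ) + (Real.sin α1 : ℂ) * Complex.I) * ((Real.cos α3 : ℂ) + (Real.sin α3 : ℂ) * Complex.I)) := by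
    apply mul_right_cancel₀ hs2C
    linear_combination (-(Real.sin α3 : ℂ)) * hz3' - ((Real.sin α1 : ℂ) * ((Real.cos α3 : ℂ) + (Real.sin α3 : ℂ) * Complex.I)) * hH2
  have hG2 : ((starRingEnd ℂ) z1 - (starRingEnd ℂ) z3) * (Real.sin α3 : ℂ) = -(((starRingEnd ℂ) z2 - (starRingEnd ℂ) z1) * ((Real.sin α2 : ℂ) * ((Real.cos α1 : ℂ) - (Real.sin α1 : ℂ) * Complex.I))) := by
    have h := congrArg (starRingEnd ℂ) hH2
    simp only [map_mul, map_sub, map_neg, map_add, Complex.conj_ofReal, Complex.conj_I] at h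
    linear_combination h
  have hG1 : ((starRingEnd ℂ) z3 - (starRingEnd ℂ) z2) * (Real.sin α3 : ℂ) = ((starRingEnd ℂ) z2 - (starRingEnd ℂ) z1) * ((Real.sin α1 : ℂ) * ((Real.cos α1 : ℂ) - (Real.sin α1 : ℂ) * Complex.I) * ((Real.cos α3 : ℂ) - (Real.sin α3 : ℂ) * Complex.I)) := by
    have h := congrArg (starRingEnd ℂ) hH1
    simp only [map_mul, map_sub, map_neg, map_add, Complex.conj_ofReal, Complex.conj_I] at h
    linear_combination h
  have hB : (z2 - z1) * ((starRingEnd ℂ) z2 - (starRingEnd ℂ) z1) = 4 * (R : ℂ)^2 * (Real.sin α3 : ℂ)^2 := by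
    have h := Complex.mul_conj (z2 - z1)
    rw [map_sub] at h
    rw [h, Complex.normSq_eq_norm_sq, hl]
    push_cast; ring
  have har : (z3 - z1) * ((starRingEnd ℂ) z2 - (starRingEnd ℂ) z1) - (z2 - z1) * ((starRingEnd ℂ) z3 - (starRingEnd ℂ) z1) = (A : ℂ) * (4 * Complex.I) := by
    rw [div_eq_iff (by simp [Complex.I_ne_zero] : (4 * Complex.I : ℂ) ≠ 0)] at harea
    linear_combination harea
  have hA' : (A : ℂ) = 2 * (R : ℂ)^2 * ((Real.sin α1 : ℂ) * (Real.sin α2 : ℂ) * (Real.sin α3 : ℂ)) := by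
    apply mul_right_cancel₀ (show (4 * Complex.I * (Real.sin α3 : ℂ)) ≠ 0 by simp [Complex.I_ne_zero, hs3C'])
    linear_combination (-(Real.sin α3 : ℂ)) * har - ((starRingEnd ℂ) z2 - (starRingEnd ℂ) z1) * hH2 + (z2 - z1) * hG2 + (2 * (Real.sin α1 : ℂ) * (Real.sin α2 : ℂ) * Complex.I) * hB
  have hK11 : ((Real.cot α2 : ℂ) + (Real.cot α3 : ℂ)) = (z3 - z2) * ((starRingEnd ℂ) z3 - (starRingEnd ℂ) z2) / (2 * (A:ℂ)) := by
    rw [eq_div_iff h2A]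
    apply mul_right_cancel₀ hm
    linear_combination (norm := ring_nf) (2 * ((Real.cot α2 : ℂ) + (Real.cot α3 : ℂ)) * ((Real.sin α1 : ℂ) * (Real.sin α2 : ℂ) * (Real.sin α3 : ℂ)^2)) * hA' - ((Real.sin α1 : ℂ) * (Real.sin α2 : ℂ) * (Real.sin α3 : ℂ) * ((starRingEnd ℂ) z3 - (starRingEnd ℂ) z2)) * hH1 - ((Real.sin α1 : ℂ) * (Real.sin α2 : ℂ) * ((z2 - z1) * ((Real.sin α1 : ℂ) * ((Real.cos α1 : ℂ) + (Real.sin α1 : ℂ) * Complex.I) * ((Real.cos α3 : ℂ) + (Real.sin α3 : ℂ) * Complex.I)))) * hG1 - ((Real.sin α1 : ℂ) * (Real.sin α2 : ℂ) * ((Real.sin α1 : ℂ)^2 * ((Real.cos α1 : ℂ) + (Real.sin α1 : ℂ) * Complex.I) * ((Real.cos α3 : ℂ) + (Real.sin α3 : ℂ) * Complex.I) * ((Real.cos α1 : ℂ) - (Real.sin α1 : ℂ) * Complex.I) * ((Real.cos α3 : ℂ) - (Real.sin α3 : ℂ) * Complex.I))) * hB + (4 * (R:ℂ)^2 * (Real.sin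 α1 : ℂ) * (Real.sin α2 : ℂ) * (Real.sin α3 : ℂ)^2) * (((Real.sin α1 : ℂ) * (Real.sin α3 : ℂ)) * hQ2 + ((Real.sin α1 : ℂ) * (Real.sin α2 : ℂ)) * hQ3 - (Real.sin α1 : ℂ) * hT1 - (Real.sin α1 : ℂ)^2 * (((Real.sin α3 : ℂ)^2 + (Real.cos α3 : ℂ)^2) * hP1' + hP3' + (-(((Real.sin α1 : ℂ)^2 + (Real.cos α1 : ℂ)^2) * (Real.sin α3 : ℂ)^2 + (Real.sin α1 : ℂ)^2 * ((Real.sin α3 : ℂ)^2 + (Real.cos α3 : ℂ)^2) - (Real.sin α1 : ℂ)^2 * (Real.sin α3 : ℂ)^2 * (Complex.I^2 + 1))) * hI))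
  have hK12 : (-(Real.cot α3 : ℂ) - Complex.I) = (z3 - z2) * ((starRingEnd ℂ) z1 - (starRingEnd ℂ) z3) / (2 * (A:ℂ)) := by
    rw [eq_div_iff h2A]
    apply mul_right_cancel₀ hm
    linear_combination (norm := ring_nf) (2 * (-(Real.cot α3 : ℂ) - Complex.I) * ((Real.sin α1 : ℂ) * (Real.sin α2 : ℂ) * (Real.sin α3 : ℂ)^2)) * hA' - ((Real.sin α1 : ℂ) * (Real.sin α2 : ℂ) * (Real.sin α3 : ℂ) * ((starRingEnd ℂ) z1 - (starRingEnd ℂ) z3)) * hH1 - ((Real.sin α1 : ℂ) * (Real.sin α2 : ℂ) * ((z2 - z1) * ((Real.sin α1 : ℂ) * ((Real.cos α1 : ℂ) + (Real.sin α1 : ℂ) * Complex.I) * ((Real.cos α3 : ℂ) + (Real.sin α3 : ℂ) * Complex.I)))) * hG2 - ((Real.sin α1 : ℂ) * (Real.sin α2 : ℂ) * (-((Real.sin α1 : ℂ) * (Real.sin α2 : ℂ) * ((Real.cos α1 : ℂ) + (Real.sin α1 : ℂ) * Complex.I) * ((Real.cos α3 : ℂ) + (Real.sin α3 : ℂ)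 * Complex.I) * ((Real.cos α1 : ℂ) - (Real.sin α1 : ℂ) * Complex.I)))) * hB + (4 * (R:ℂ)^2 * (Real.sin α1 : ℂ) * (Real.sin α2 : ℂ) * (Real.sin α3 : ℂ)^2) * ((-((Real.sin α1 : ℂ) * (Real.sin α2 : ℂ))) * hQ3 + ((Real.sin α1 : ℂ) * (Real.sin α2 : ℂ) * ((Real.cos α3 : ℂ) + (Real.sin α3 : ℂ) * Complex.I)) * hP1' - ((Real.sin α1 : ℂ)^3 * (Real.sin α2 : ℂ) * ((Real.cos α3 : ℂ) + (Real.sin α3 : ℂ) * Complex.I)) * hI)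
  have hK13 : (-(Real.cot α2 : ℂ) + Complex.I) = (z3 - z2) * ((starRingEnd ℂ) z2 - (starRingEnd ℂ) z1) / (2 * (A:ℂ)) := by
    rw [eq_div_iff h2A]
    apply mul_right_cancel₀ hm
    linear_combination (norm := ring_nf) (2 * (-(Real.cot α2 : ℂ) + Complex.I) * ((Real.sin α1 : ℂ) * (Real.sin α2 : ℂ) * (Real.sin α3 : ℂ)^2)) * hA' - ((Real.sin α1 : ℂ) * (Real.sin α2 : ℂ) * (Real.sin α3 : ℂ) * ((starRingEnd ℂ) z2 - (starRingEnd ℂ) z1)) * hH1 - ((Real.sin α1 : ℂ) * (Real.sin α2 : ℂ) * ((Real.sin α1 : ℂ) * (Real.sin α3 : ℂ) * ((Real.cos α1 : ℂ) + (Real.sin α1 : ℂ) * Complex.I) * ((Real.cos α3 : ℂ) + (Real.sin α3 : ℂ) * Complex.I))) * hB + (4 * (R:ℂ)^2 * (Real.sin α1 : ℂ) * (Real.sin α2 : ℂ) * (Real.sin α3 : ℂ)^2) * ((-((Real.sin α1 : ℂ) * (Real.sin α3 : ℂ))) * hQ2 - ((Real.sin α1 : ℂ) * (Real.sin α3 :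 ℂ)) * hC2 + ((Real.sin α1 : ℂ) * (Real.sin α3 : ℂ) * Complex.I) * hT2 - ((Real.sin α1 : ℂ)^2 * (Real.sin α3 : ℂ)^2) * hI)
  have hK21 : (-(Real.cot α3 : ℂ) + Complex.I) = (z1 - z3) * ((starRingEnd ℂ) z3 - (starRingEnd ℂ) z2) / (2 * (A:ℂ)) := by
    rw [eq_div_iff h2A]
    apply mul_right_cancel₀ hm
    linear_combination (norm := ring_nf) (2 * (-(Real.cot α3 : ℂ) + Complex.I) * ((Real.sin α1 : ℂ) * (Real.sin α2 : ℂ) * (Real.sin α3 : ℂ)^2)) * hA' - ((Real.sin α1 : ℂ) * (Real.sin α2 : ℂ) * (Real.sin α3 : ℂ) * ((starRingEnd ℂ) z3 - (starRingEnd ℂ) z2)) * hH2 - ((Real.sin α1 : ℂ) * (Real.sin α2 : ℂ) * (-((z2 - z1) * ((Real.sin α2 : ℂ) * ((Real.cos α1 : ℂ) + (Real.sin α1 : ℂ) * Complex.I))))) * hG1 - ((Real.sin α1 : ℂ) * (Real.sin α2 : ℂ) * (-((Real.sin α1 : ℂ) * (Real.sin α2 : ℂ) * ((Real.cos α1 :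 ℂ) + (Real.sin α1 : ℂ) * Complex.I) * ((Real.cos α1 : ℂ) - (Real.sin α1 : ℂ) * Complex.I) * ((Real.cos α3 : ℂ) - (Real.sin α3 : ℂ) * Complex.I)))) * hB + (4 * (R:ℂ)^2 * (Real.sin α1 : ℂ) * (Real.sin α2 : ℂ) * (Real.sin α3 : ℂ)^2) * ((-((Real.sin α1 : ℂ) * (Real.sin α2 : ℂ))) * hQ3 + ((Real.sin α1 : ℂ) * (Real.sin α2 : ℂ) * ((Real.cos α3 : ℂ) - (Real.sin α3 : ℂ) * Complex.I)) * hP1' - ((Real.sin α1 : ℂ)^3 * (Real.sin α2 : ℂ) * ((Real.cos α3 : ℂ) - (Real.sin α3 : ℂ) * Complex.I)) * hI)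
  have hK22 : ((Real.cot α3 : ℂ) + (Real.cot α1 : ℂ)) = (z1 - z3) * ((starRingEnd ℂ) z1 - (starRingEnd ℂ) z3) / (2 * (A:ℂ)) := by
    rw [eq_div_iff h2A]
    apply mul_right_cancel₀ hm
    linear_combination (norm := ring_nf) (2 * ((Real.cot α3 : ℂ) + (Real.cot α1 : ℂ)) * ((Real.sin α1 : ℂ) * (Real.sin α2 : ℂ) * (Real.sin α3 : ℂ)^2)) * hA' - ((Real.sin α1 : ℂ) * (Real.sin α2 : ℂ) * (Real.sin α3 : ℂ) * ((starRingEnd ℂ) z1 - (starRingEnd ℂ) z3)) * hH2 - ((Real.sin α1 : ℂ) * (Real.sin α2 : ℂ) * (-((z2 - z1) * ((Real.sin α2 : ℂ) * ((Real.cos α1 : ℂ) + (Real.sin α1 : ℂ) * Complex.I))))) * hG2 - ((Real.sin α1 : ℂ) * (Real.sin α2 : ℂ) * ((Real.sin α2 : ℂ)^2 * ((Real.cos α1 : ℂ) + (Real.sin α1 : ℂ) * Complex.I) * ((Real.cos α1 : ℂ) - (Real.sin α1 : ℂ) * Complex.I))) * hB + (4 * (R:ℂ)^2 * (Real.sin α1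 : ℂ) * (Real.sin α2 : ℂ) * (Real.sin α3 : ℂ)^2) * (((Real.sin α1 : ℂ) * (Real.sin α2 : ℂ)) * hQ3 + ((Real.sin α2 : ℂ) * (Real.sin α3 : ℂ)) * hQ1 - (Real.sin α2 : ℂ) * hT2 - (Real.sin α2 : ℂ)^2 * hP1' + ((Real.sin α1 : ℂ)^2 * (Real.sin α2 : ℂ)^2) * hI)
  have hK23 : (-(Real.cot α1 : ℂ) - Complex.I) = (z1 - z3) * ((starRingEnd ℂ) z2 - (starRingEnd ℂ) z1) / (2 * (A:ℂ)) := by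
    rw [eq_div_iff h2A]
    apply mul_right_cancel₀ hm
    linear_combination (norm := ring_nf) (2 * (-(Real.cot α1 : ℂ) - Complex.I) * ((Real.sin α1 : ℂ) * (Real.sin α2 : ℂ) * (Real.sin α3 : ℂ)^2)) * hA' - ((Real.sin α1 : ℂ) * (Real.sin α2 : ℂ) * (Real.sin α3 : ℂ) * ((starRingEnd ℂ) z2 - (starRingEnd ℂ) z1)) * hH2 - ((Real.sin α1 : ℂ) * (Real.sin α2 : ℂ) * (-((Real.sin α2 : ℂ) * (Real.sin α3 : ℂ) * ((Real.cos α1 : ℂ) + (Real.sin α1 : ℂ) * Complex.I)))) * hB + (4 * (R:ℂ)^2 * (Real.sin α1 : ℂ) * (Real.sin α2 : ℂ) * (Real.sin α3 : ℂ)^2) * ((-((Real.sin α2 : ℂ) * (Real.sin α3 : ℂ))) * hQ1)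
  have hK31 : (-(Real.cot α2 : ℂ) - Complex.I) = (z2 - z1) * ((starRingEnd ℂ) z3 - (starRingEnd ℂ) z2) / (2 * (A:ℂ)) := by
    rw [eq_div_iff h2A]
    apply mul_right_cancel₀ hm
    linear_combination (norm := ring_nf) (2 * (-(Real.cot α2 : ℂ) - Complex.I) * ((Real.sin α1 : ℂ) * (Real.sin α2 : ℂ) * (Real.sin α3 : ℂ)^2)) * hA' - ((Real.sin α1 : ℂ) * (Real.sin α2 : ℂ) * ((z2 - z1) * (Real.sin α3 : ℂ))) * hG1 - ((Real.sin α1 : ℂ) * (Real.sin α2 : ℂ) * ((Real.sin α1 : ℂ) * (Real.sin α3 : ℂ) * ((Real.cos α1 : ℂ) - (Real.sin α1 : ℂ) * Complex.I) * ((Real.cos α3 : ℂ) - (Real.sin α3 : ℂ) * Complex.I))) * hB + (4 * (R:ℂ)^2 * (Real.sin α1 : ℂ) * (Real.sin α2 : ℂ) * (Real.sin α3 : ℂ)^2) * ((-((Real.sin α1 : ℂ) * (Real.sin α3 : ℂ))) * hQ2 - ((Real.sin α1 : ℂ) * (Real.sin α3 : ℂ)) * hC2 - ((Real.sin α1 :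 ℂ) * (Real.sin α3 : ℂ) * Complex.I) * hT2 - ((Real.sin α1 : ℂ)^2 * (Real.sin α3 : ℂ)^2) * hI)
  have hK32 : (-(Real.cot α1 : ℂ) + Complex.I) = (z2 - z1) * ((starRingEnd ℂ) z1 - (starRingEnd ℂ) z3) / (2 * (A:ℂ)) := by
    rw [eq_div_iff h2A]
    apply mul_right_cancel₀ hm
    linear_combination (norm := ring_nf) (2 * (-(Real.cot α1 : ℂ) + Complex.I) * ((Real.sin α1 : ℂ) * (Real.sin α2 : ℂ) * (Real.sin α3 : ℂ)^2)) * hA' - ((Real.sin α1 : ℂ) * (Real.sin α2 : ℂ) * ((z2 - z1) * (Real.sin α3 : ℂ))) * hG2 - ((Real.sin α1 : ℂ) * (Real.sin α2 : ℂ) * (-((Real.sin α2 : ℂ) * (Real.sin α3 : ℂ) * ((Real.cos α1 : ℂ) - (Real.sin α1 : ℂ) * Complex.I)))) * hB + (4 * (R:ℂ)^2 * (Real.sin α1 : ℂ) * (Real.sin α2 : ℂ) * (Real.sin α3 : ℂ)^2) * ((-((Real.sin α2 : ℂ) * (Real.sin α3 : ℂ))) * hQ1)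
  have hK33 : ((Real.cot α1 : ℂ) + (Real.cot α2 : ℂ)) = (z2 - z1) * ((starRingEnd ℂ) z2 - (starRingEnd ℂ) z1) / (2 * (A:ℂ)) := by
    rw [eq_div_iff h2A]
    apply mul_right_cancel₀ hm
    linear_combination (norm := ring_nf) (2 * ((Real.cot α1 : ℂ) + (Real.cot α2 : ℂ)) * ((Real.sin α1 : ℂ) * (Real.sin α2 : ℂ) * (Real.sin α3 : ℂ)^2)) * hA' - ((Real.sin α1 : ℂ) * (Real.sin α2 : ℂ) * ((Real.sin α3 : ℂ)^2)) * hB + (4 * (R:ℂ)^2 * (Real.sin α1 : ℂ) * (Real.sin α2 : ℂ) * (Real.sin α3 : ℂ)^2) * (((Real.sin α2 : ℂ) * (Real.sin α3 : ℂ)) * hQ1 + ((Real.sin α1 : ℂ) * (Real.sin α3 : ℂ)) * hQ2 - (Real.sin α3 : ℂ) * hT3)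

  simp only [Dmat, Fin.sum_univ_three, Matrix.smul_apply, smul_eq_mul,
    Matrix.of_apply, Matrix.cons_val', Matrix.cons_val_zero, Matrix.cons_val_one,
    Matrix.head_cons, Matrix.empty_val', Matrix.cons_val_fin_one, Matrix.head_fin_const,
    Matrix.cons_val_two, Matrix.tail_cons, Matrix.head_val']
  rw [hK11, hK12, hK13, hK21, hK22, hK23, hK31, hK32, hK33, stmt9aux A R _ _ hAC hRC]
  field_simp
  ring
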